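/- arXiv:2108.04693 — 5 statements merged into one kernel-verified Lean document; each statement's English description precedes it below -/
import Mathlib

section
/- Let n ≥ 1, let B₁, B₂ be endomorphisms of kⁿ, let i ∈ kⁿ, and let j : kⁿ → k be a linear functional. Suppose the preprojective relation B₁∘B₂ − B₂∘B₁ + (i⊗j) = 0 holds, where i⊗j denotes the endomorphism v ↦ j(v)·i, and suppose i is a cyclic vector for B₁, B₂. Then j = 0. (Lemma 2.9: every χ₁-stable point (B_a, B_{a*}, i, j) of μ⁻¹(0) has j = 0.) -/
/-- `i` is a cyclic vector for the family of endomorphisms `B` of `V`: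
the only subspace containing `i` and invariant under every `B s` is all of `V`. -/
def IsCyclicVector {k : Type*} [Field k] {V : Type*} [AddCommGroup V] [Module k V]
    {m : ℕ} (B : Fin m → Module.End k V) (i : V) : Prop :=
  ∀ W : Submodule k V, i ∈ W → (∀ s, ∀ v ∈ W, B s v ∈ W) → W = ⊤

/-- The word `w` (read left to right) evaluated as a product of `B₁` (false) and `B₂` (true). -/
def Mword {k : Type*} [CommRing k] {V : Type*} [AddCommGroup V] [Module k V]
    (B₁ B₂ : Module.End k V) : List Bool → Module.End k V
  | [] => 1
  | s :: w => (if s then B₂ else B₁) * Mword B₁ B₂ w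

lemma Mword_nil {k : Type*} [CommRing k] {V : Type*} [AddCommGroup V] [Module k V]
    (B₁ B₂ : Module.End k V) : Mword B₁ B₂ [] = 1 := rfl

lemma Mword_cons {k : Type*} [CommRing k] {V : Type*} [AddCommGroup V] [Module k V]
    (B₁ B₂ : Module.End k V) (s : Bool) (w : List Bool) :
    Mword B₁ B₂ (s :: w) = (if s then B₂ else B₁) * Mword B₁ B₂ w := rfl

lemma Mword_append {k : Type*} [CommRing k] {V : Type*} [AddCommGroup V] [Module k V]
    (B₁ B₂ : Module.End k V) (a b : List Bool) :
    Mword B₁ B₂ (a ++ b) = Mword B₁ B₂ a * Mword B₁ B₂ b := by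
  induction a with
  | nil => simp [Mword]
  | cons s a ih => simp [Mword, ih, mul_assoc]

lemma trace_smulRight_aux {k : Type*} [Field k] {n : ℕ}
    (j : (Fin n → k) →ₗ[k] k) (x : Fin n → k) :
    LinearMap.trace k (Fin n → k) (j.smulRight x) = j x := by
  have h : j.smulRight x = dualTensorHom k (Fin n → k) (Fin n → k) (j ⊗ₜ x) := by
    ext v
    simp [dualTensorHom_apply]
  rw [h, LinearMap.trace_eq_contract_apply, contractLeft_apply]

/-- Lemma 2.9: if `B₁ ∘ B₂ - B₂ ∘ B₁ + i ⊗ j = 0` and `i` is a cyclic vector for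
`B₁, B₂`, then `j = 0`. -/
theorem j_eq_zero_of_preprojective_of_cyclic
    {k : Type*} [Field k] [IsAlgClosed k] [CharZero k]
    {n : ℕ} (hn : 1 ≤ n)
    (B₁ B₂ : Module.End k (Fin n → k)) (i : Fin n → k)
    (j : (Fin n → k) →ₗ[k] k)
    (hrel : (B₁ ∘ₗ B₂ - B₂ ∘ₗ B₁ + j.smulRight i : (Fin n → k) →ₗ[k] (Fin n → k)) = 0)
    (hcyc : IsCyclicVector ![B₁, B₂] i) :
    j = 0 := by
  -- rewrite the relation as `i ⊗ j = B₂ * B₁ - B₁ * B₂` in the endomorphism ring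
  have hrel' : (j.smulRight i : Module.End k (Fin n → k)) = B₂ * B₁ - B₁ * B₂ := by
    have h := eq_neg_of_add_eq_zero_right hrel
    rw [h, neg_sub]
    rfl
  -- trace of a composition with the rank-one map
  have hL1 : ∀ f : Module.End k (Fin n → k),
      j (f i) = LinearMap.trace k (Fin n → k) (f * j.smulRight i) := by
    intro f
    have h : f * j.smulRight i = j.smulRight (f i) := by
      ext v
      simp [Module.End.mul_apply]
    rw [h, trace_smulRight_aux]
  have hKey : ∀ f g : Module.End k (Fin n → k),
      LinearMap.trace k (Fin n → k) (f * j.smulRight i * g) = j ((g * f) i) := by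
    intro f g
    rw [LinearMap.trace_mul_comm, ← mul_assoc, ← hL1]
  -- the pointwise relation
  have hpt : ∀ v : Fin n → k, B₂ (B₁ v) = B₁ (B₂ v) + j v • i := by
    intro v
    have h := LinearMap.ext_iff.mp hrel' v
    simp only [LinearMap.sub_apply, Module.End.mul_apply, LinearMap.smulRight_apply] at h
    exact sub_eq_iff_eq_add'.mp h.symm
  -- main claim: `j` kills every word applied to `i`
  have main : ∀ ℓ : ℕ, ∀ w : List Bool, w.length = ℓ → j (Mword B₁ B₂ w i) = 0 := by
    intro ℓ
    induction ℓ using Nat.strong_induction_on with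
    | _ ℓ IH =>
    have IH' : ∀ w : List Bool, w.length < ℓ → j (Mword B₁ B₂ w i) = 0 :=
      fun w h => IH _ h w rfl
    -- permutation invariance of `w ↦ j (Mword w i)` at level ℓ
    have hperm : ∀ l₁ l₂ : List Bool, l₁.Perm l₂ → ∀ u : List Bool,
        u.length + l₁.length ≤ ℓ →
        j (Mword B₁ B₂ (u ++ l₁) i) = j (Mword B₁ B₂ (u ++ l₂) i) := by
      intro l₁ l₂ hp
      induction hp with
      | nil => intro u _; rfl
      | cons x p ih =>
        rename_i l₁ l₂
        intro u hu
        rw [show u ++ x :: l₁ = (u ++ [x]) ++ l₁ by simp,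
          show u ++ x :: l₂ = (u ++ [x]) ++ l₂ by simp]
        exact ih (u ++ [x]) (by simp at hu ⊢; omega)
      | swap x y l =>
        intro u hu
        have hl : l.length < ℓ := by simp at hu; omega
        cases x <;> cases y <;>
          simp [Mword_append, Mword_cons, Module.End.mul_apply, hpt, IH' l hl]
      | trans p q ih₁ ih₂ =>
        intro u hu
        rw [ih₁ u hu]
        exact ih₂ u (by have := p.length_eq; omega)
    intro w₀ hw₀
    -- the commutator expansion identity
    have G : ∀ w u : List Bool, (u ++ w).Perm w₀ →
        LinearMap.trace k (Fin n → k)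
          (Mword B₁ B₂ u * (B₁ * Mword B₁ B₂ w - Mword B₁ B₂ w * B₁) * B₂)
        = -((w.count true : ℕ) : k) * j (Mword B₁ B₂ w₀ i) := by
      intro w
      induction w with
      | nil => intro u hp; simp [Mword_nil]
      | cons s w ihw =>
        intro u hp
        have hsplit : B₁ * Mword B₁ B₂ (s :: w) - Mword B₁ B₂ (s :: w) * B₁
            = (B₁ * (if s then B₂ else B₁) - (if s then B₂ else B₁) * B₁) * Mword B₁ B₂ w
              + (if s then B₂ else B₁) * (B₁ * Mword B₁ B₂ w - Mword B₁ B₂ w * B₁) := by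
          rw [Mword_cons]
          simp only [mul_sub, sub_mul, mul_assoc]
          abel
        have hu' : ((u ++ [s]) ++ w).Perm w₀ := by simpa using hp
        have h2 : Mword B₁ B₂ u *
              ((if s then B₂ else B₁) * (B₁ * Mword B₁ B₂ w - Mword B₁ B₂ w * B₁)) * B₂
            = Mword B₁ B₂ (u ++ [s]) * (B₁ * Mword B₁ B₂ w - Mword B₁ B₂ w * B₁) * B₂ := by
          rw [Mword_append, Mword_cons, Mword_nil, mul_one]
          simp only [mul_assoc]
        rw [hsplit, mul_add, add_mul, map_add, h2, ihw (u ++ [s]) hu']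
        cases s with
        | false =>
          simp
        | true =>
          have hC' : B₁ * B₂ - B₂ * B₁ = -(j.smulRight i) := by rw [hrel', neg_sub]
          have e1 : Mword B₁ B₂ u *
              ((B₁ * (if true then B₂ else B₁) - (if true then B₂ else B₁) * B₁)
                * Mword B₁ B₂ w) * B₂
              = -(Mword B₁ B₂ u * j.smulRight i * (Mword B₁ B₂ w * B₂)) := by
            simp only [if_pos]
            rw [hC']
            ext v
            simp [Module.End.mul_apply]
          rw [e1, map_neg, hKey]
          have e2 : Mword B₁ B₂ w * B₂ * Mword B₁ B₂ u = Mword B₁ B₂ (w ++ true :: u) := by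
            simp [Mword_append, Mword_cons, mul_assoc]
          rw [e2]
          have hpm : (w ++ true :: u).Perm w₀ :=
            (List.perm_middle.trans ((List.perm_append_comm).cons true)).trans
              (List.perm_middle.symm.trans hp)
          have hlen : ([] : List Bool).length + (w ++ true :: u).length ≤ ℓ := by
            have h1 := hpm.length_eq
            simp only [List.length_append, List.length_cons, List.length_nil] at h1 ⊢
            omega
          have := hperm (w ++ true :: u) w₀ hpm [] hlen
          simp only [List.nil_append] at this
          rw [this]
          have hc : ((true :: w).count true : ℕ) = w.count true + 1 := by
            simp [List.count_cons]
          rw [hc]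
          push_cast
          ring
    -- now conclude
    have h0 := G w₀ [] (by simpa using List.Perm.refl w₀)
    have final : j (Mword B₁ B₂ w₀ i)
        = -((w₀.count true : ℕ) : k) * j (Mword B₁ B₂ w₀ i) := by
      rw [← h0, hL1 (Mword B₁ B₂ w₀), hrel', Mword_nil, one_mul,
        mul_sub, sub_mul, map_sub, map_sub, ← mul_assoc, ← mul_assoc,
        LinearMap.trace_mul_comm, ← mul_assoc]
    have h2 : ((w₀.count true + 1 : ℕ) : k) * j (Mword B₁ B₂ w₀ i) = 0 := by
      push_cast
      linear_combination final
    have hne : ((w₀.count true + 1 : ℕ) : k) ≠ 0 :=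
      Nat.cast_ne_zero.mpr (Nat.succ_ne_zero _)
    exact (mul_eq_zero.mp h2).resolve_left hne
  have hall : ∀ w : List Bool, j (Mword B₁ B₂ w i) = 0 := fun w => main w.length w rfl
  -- the span of all words applied to i
  set S : Set (Fin n → k) := {v | ∃ w : List Bool, v = Mword B₁ B₂ w i} with hS
  set W : Submodule k (Fin n → k) := Submodule.span k S with hW
  have hiW : i ∈ W := Submodule.subset_span ⟨[], by simp [Mword_nil]⟩
  have hinv : ∀ s, ∀ v ∈ W, (![B₁, B₂] : Fin 2 → Module.End k (Fin n → k)) s v ∈ W := by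
    intro s v hv
    induction hv using Submodule.span_induction with
    | mem x hx =>
      obtain ⟨w, rfl⟩ := hx
      fin_cases s
      · exact Submodule.subset_span ⟨false :: w, by simp [Mword_cons, Module.End.mul_apply]⟩
      · exact Submodule.subset_span ⟨true :: w, by simp [Mword_cons, Module.End.mul_apply]⟩
    | zero => simp
    | add x y _ _ hx hy => rw [map_add]; exact W.add_mem hx hy
    | smul c x _ hx => rw [map_smul]; exact W.smul_mem c hx
  have hWtop : W = ⊤ := hcyc W hiW hinv
  rw [← LinearMap.ker_eq_top, ← top_le_iff, ← hWtop, hW, Submodule.span_le]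
  rintro v ⟨w, rfl⟩
  exact hall w
end

section
/- Let n ≥ 1, let B₁, B₂ be commuting endomorphisms of kⁿ, and let i ∈ kⁿ. Then the following are equivalent: (a) the representation (B₁, B₂, i) of dimension vector (1,n) is θ-semistable for θ = 1; (b) it is θ-stable for θ = 1; (c) i is a cyclic vector for B₁, B₂. (This is the content of the proof of Theorem 2.2: a point (B₁,B₂,i) of Z is χ-stable for χ = det if and only if the corresponding k[x,y]-module kⁿ is generated by i.) -/
/-- `(Winf, W0)` is a subrepresentation of the framed representation `(B, i)`. -/
def IsSubrep {k : Type*} [Field k] {V : Type*} [AddCommGroup V] [Module k V]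
    {m : ℕ} (B : Fin m → Module.End k V) (i : V)
    (Winf : Submodule k k) (W0 : Submodule k V) : Prop :=
  (∀ s, ∀ v ∈ W0, B s v ∈ W0) ∧ (∀ c ∈ Winf, c • i ∈ W0)

/-- The value of the stability parameter `θ = 1` on a pair of subspaces. -/
noncomputable def thetaVal (k : Type*) [Field k] (n : ℕ)
    (Winf : Submodule k k) (W0 : Submodule k (Fin n → k)) : ℤ :=
  -(n : ℤ) * (Module.finrank k Winf : ℤ) + (Module.finrank k W0 : ℤ)

/-- The framed representation `(B, i)` of dimension vector `(1, n)` is `θ`-semistable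
for `θ = 1`. -/
def IsThetaSemistable {k : Type*} [Field k] {n m : ℕ}
    (B : Fin m → Module.End k (Fin n → k)) (i : Fin n → k) : Prop :=
  ∀ Winf : Submodule k k, ∀ W0 : Submodule k (Fin n → k), IsSubrep B i Winf W0 →
    ¬(Winf = ⊥ ∧ W0 = ⊥) → ¬(Winf = ⊤ ∧ W0 = ⊤) → 0 ≤ thetaVal k n Winf W0

/-- The framed representation `(B, i)` of dimension vector `(1, n)` is `θ`-stable
for `θ = 1`. -/
def IsThetaStable {k : Type*} [Field k] {n m : ℕ}
    (B : Fin m → Module.End k (Fin n → k)) (i : Fin n → k) : Prop :=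
  ∀ Winf : Submodule k k, ∀ W0 : Submodule k (Fin n → k), IsSubrep B i Winf W0 →
    ¬(Winf = ⊥ ∧ W0 = ⊥) → ¬(Winf = ⊤ ∧ W0 = ⊤) → 0 < thetaVal k n Winf W0

/-- The content of the proof of Theorem 2.2: for commuting `B₁, B₂` the conditions
(a) `θ`-semistable for `θ = 1`, (b) `θ`-stable for `θ = 1`, and (c) `i` is a cyclic
vector for `B₁, B₂`, are all equivalent. -/
theorem semistable_tfae_stable_tfae_cyclic
    {k : Type*} [Field k] [IsAlgClosed k] [CharZero k]
    {n : ℕ} (hn : 1 ≤ n)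
    (B₁ B₂ : Module.End k (Fin n → k)) (i : Fin n → k)
    (hcomm : B₁ * B₂ = B₂ * B₁) :
    [IsThetaSemistable ![B₁, B₂] i,
     IsThetaStable ![B₁, B₂] i,
     IsCyclicVector ![B₁, B₂] i].TFAE := by
  tfae_have 2 → 1 := by
    intro h Winf W0 hsub h1 h2
    exact le_of_lt (h Winf W0 hsub h1 h2)
  tfae_have 1 → 3 := by
    intro h W hiW hinv
    by_contra hW
    have hsub : IsSubrep ![B₁, B₂] i ⊤ W :=
      ⟨hinv, fun c _ => W.smul_mem c hiW⟩
    have h1 : ¬((⊤ : Submodule k k) = ⊥ ∧ W = ⊥) := by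
      rintro ⟨ht, -⟩
      exact (bot_ne_top (α := Submodule k k)) ht.symm
    have h2 : ¬((⊤ : Submodule k k) = ⊤ ∧ W = ⊤) := by
      rintro ⟨-, ht⟩; exact hW ht
    have := h ⊤ W hsub h1 h2
    unfold thetaVal at this
    rw [finrank_top, Module.finrank_self] at this
    have hle : Module.finrank k W ≤ n := by
      have := Submodule.finrank_le W
      simpa [Module.finrank_fin_fun] using this
    have hge : n ≤ Module.finrank k W := by omega
    have : Module.finrank k W = Module.finrank k (Fin n → k) := by
      rw [Module.finrank_fin_fun]; omega
    exact hW (Submodule.eq_top_of_finrank_eq this)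
  tfae_have 3 → 2 := by
    intro h Winf W0 hsub h1 h2
    rcases eq_bot_or_eq_top Winf with hinf | hinf
    · subst hinf
      have hW0 : W0 ≠ ⊥ := fun hb => h1 ⟨rfl, hb⟩
      have hpos : 0 < Module.finrank k W0 := by
        rw [Module.finrank_pos_iff]
        exact Submodule.nontrivial_iff_ne_bot.mpr hW0
      unfold thetaVal
      simp only [finrank_bot]
      omega
    · subst hinf
      have hiW0 : i ∈ W0 := by
        simpa using hsub.2 1 trivial
      have : W0 = ⊤ := h W0 hiW0 hsub.1
      exact absurd ⟨rfl, this⟩ h2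
  tfae_finish
end

section
/- Let ι be a finite set of vertices with a distinguished element o, let (V_m)_{m∈ι} be finite-dimensional k-vector spaces with dim V_o = 1, let E be a finite set of edges with source and target maps s, t : E → ι, and for each e ∈ E let B_e : V_{s(e)} → V_{t(e)} and B_e^* : V_{t(e)} → V_{s(e)} be k-linear maps. If for every vertex m ≠ o the preprojective relation Σ_{e : t(e)=m} B_e ∘ B_e^* − Σ_{e : s(e)=m} B_e^* ∘ B_e = 0 holds in End(V_m), then the same relation also holds at the vertex o: Σ_{e : t(e)=o} B_e ∘ B_e^* − Σ_{e : s(e)=o} B_e^* ∘ B_e = 0. (This is the general statement behind Remark 3.5(2): any point (B,i,j) ∈ μ⁻¹(0) for the framed McKay quiver with one-dimensional framing vertex automatically satisfies j∘i = 0.) -/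
open Finset

/-- The preprojective expression at a vertex `m` of a quiver with vertex set `ι`,
edge set `E`, source/target maps `s, t`, and linear maps `B e : V (s e) → V (t e)`,
`Bs e : V (t e) → V (s e)`:
`Σ_{e : t e = m} B e ∘ Bs e − Σ_{e : s e = m} Bs e ∘ B e ∈ End (V m)`. -/
noncomputable def preprojAt {k : Type*} [Field k]
    {ι : Type*} [Fintype ι] [DecidableEq ι]
    {V : ι → Type*} [∀ m, AddCommGroup (V m)] [∀ m, Module k (V m)]
    {E : Type*} [Fintype E] (s t : E → ι)
    (B : ∀ e, V (s e) →ₗ[k] V (t e)) (Bs : ∀ e, V (t e) →ₗ[k] V (s e))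
    (m : ι) : Module.End k (V m) :=
  (∑ e : E, if h : t e = m then (h ▸ (B e ∘ₗ Bs e) : Module.End k (V m)) else 0)
    - ∑ e : E, if h : s e = m then (h ▸ (Bs e ∘ₗ B e) : Module.End k (V m)) else 0

lemma trace_cast {k : Type*} [Field k] {ι : Type*}
    {V : ι → Type*} [∀ m, AddCommGroup (V m)] [∀ m, Module k (V m)]
    {a b : ι} (h : a = b) (f : Module.End k (V a)) :
    LinearMap.trace k (V b) (h ▸ f) = LinearMap.trace k (V a) f := by
  subst h; rfl

lemma eq_zero_of_trace_eq_zero {k : Type*} [Field k]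
    {W : Type*} [AddCommGroup W] [Module k W] [FiniteDimensional k W]
    (hW : Module.finrank k W = 1) (f : Module.End k W)
    (hf : LinearMap.trace k W f = 0) : f = 0 := by
  let b : Module.Basis (Fin 1) k W := Module.finBasisOfFinrankEq k W hW
  have h1 : LinearMap.trace k W f = (LinearMap.toMatrix b b f) 0 0 := by
    rw [LinearMap.trace_eq_matrix_trace k b f, Matrix.trace]
    simp [Matrix.diag]
  rw [h1] at hf
  have h2 : LinearMap.toMatrix b b f = 0 := by
    ext i j
    fin_cases i; fin_cases j
    simpa using hf
  exact (LinearMap.toMatrix b b).injective (h2.trans (map_zero _).symm)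

/-- Remark 3.5(2), in general form: if the framing vertex `o` carries a one-dimensional
vector space and the preprojective relation holds at every vertex `m ≠ o`, then it also
holds at `o`. -/
theorem preproj_at_framing_vertex
    {k : Type*} [Field k] [IsAlgClosed k] [CharZero k]
    {ι : Type*} [Fintype ι] [DecidableEq ι] (o : ι)
    {V : ι → Type*} [∀ m, AddCommGroup (V m)] [∀ m, Module k (V m)]
    [∀ m, FiniteDimensional k (V m)]
    (hVo : Module.finrank k (V o) = 1)
    {E : Type*} [Fintype E] (s t : E → ι)
    (B : ∀ e, V (s e) →ₗ[k] V (t e)) (Bs : ∀ e, V (t e) →ₗ[k] V (s e))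
    (hrel : ∀ m : ι, m ≠ o → preprojAt s t B Bs m = 0) :
    preprojAt s t B Bs o = 0 := by
  have htr : ∀ m : ι, LinearMap.trace k (V m) (preprojAt s t B Bs m) =
      (∑ e : E, if t e = m then LinearMap.trace k (V (t e)) (B e ∘ₗ Bs e) else 0)
      - ∑ e : E, if s e = m then LinearMap.trace k (V (s e)) (Bs e ∘ₗ B e) else 0 := by
    intro m
    rw [preprojAt, map_sub, map_sum, map_sum]
    congr 1 <;> refine Finset.sum_congr rfl fun e _ => ?_
    · split_ifs with h
      · rw [trace_cast]
      · simp
    · split_ifs with h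
      · rw [trace_cast]
      · simp
  have hsum : ∑ m : ι, LinearMap.trace k (V m) (preprojAt s t B Bs m) = 0 := by
    rw [Finset.sum_congr rfl fun m _ => htr m, Finset.sum_sub_distrib]
    have A : (∑ m : ι, ∑ e : E, if t e = m then LinearMap.trace k (V (t e)) (B e ∘ₗ Bs e) else 0)
        = ∑ e : E, LinearMap.trace k (V (t e)) (B e ∘ₗ Bs e) := by
      rw [Finset.sum_comm]
      refine Finset.sum_congr rfl fun e _ => ?_
      rw [Finset.sum_ite_eq Finset.univ (t e)]; simp
    have Bb : (∑ m : ι, ∑ e : E, if s e = m then LinearMap.trace k (V (s e)) (Bs e ∘ₗ B e) else 0)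
        = ∑ e : E, LinearMap.trace k (V (s e)) (Bs e ∘ₗ B e) := by
      rw [Finset.sum_comm]
      refine Finset.sum_congr rfl fun e _ => ?_
      rw [Finset.sum_ite_eq Finset.univ (s e)]; simp
    rw [A, Bb, sub_eq_zero]
    exact Finset.sum_congr rfl fun e _ => (LinearMap.trace_comp_comm' (B e) (Bs e)).symm
  have ho : LinearMap.trace k (V o) (preprojAt s t B Bs o) = 0 := by
    rw [Finset.sum_eq_single_of_mem o (Finset.mem_univ o)
      (fun m _ hm => by rw [hrel m hm, map_zero])] at hsum
    exact hsum
  exact eq_zero_of_trace_eq_zero hVo _ ho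
end

section
/- Let n ≥ 1 and let B₁, B₂ be n×n matrices over k whose commutator B₁B₂ − B₂B₁ has rank at most one. Then B₁ and B₂ can be simultaneously conjugated to upper triangular form: there exists g ∈ GL(n,k) such that gB₁g⁻¹ and gB₂g⁻¹ are both upper triangular (equivalently, there is a complete flag 0 = F₀ ⊂ F₁ ⊂ ⋯ ⊂ F_n = kⁿ with dim F_r = r that is invariant under both B₁ and B₂). (This is the linear algebra statement used in the proof of Lemma 2.9.) -/
open Module Submodule

section Aux

variable {k : Type*} [Field k] [IsAlgClosed k]

private lemma finrank_range_restrict_le {V : Type*} [AddCommGroup V] [Module k V]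
    [FiniteDimensional k V] (f : V →ₗ[k] V) {W : Submodule k V} (h : ∀ x ∈ W, f x ∈ W) :
    finrank k (LinearMap.range (f.restrict h)) ≤ finrank k (LinearMap.range f) := by
  rw [← Submodule.finrank_map_subtype_eq]
  apply Submodule.finrank_mono
  rintro x hx
  simp only [Submodule.mem_map] at hx
  obtain ⟨y, hy, rfl⟩ := hx
  obtain ⟨z, rfl⟩ := hy
  exact ⟨(z : V), (LinearMap.restrict_coe_apply f h z).symm⟩

/-- Two endomorphisms whose commutator has rank at most one have a common eigenvector. -/
private lemma exists_common_eigenvector (N : ℕ) :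
    ∀ (V : Type*) [AddCommGroup V] [Module k V] [FiniteDimensional k V],
      finrank k V ≤ N → 0 < finrank k V → ∀ f g : Module.End k V,
      finrank k (LinearMap.range (f * g - g * f)) ≤ 1 →
      ∃ v : V, v ≠ 0 ∧ (∃ a : k, f v = a • v) ∧ ∃ b : k, g v = b • v := by
  induction N with
  | zero => intro V _ _ _ h1 h2; omega
  | succ N ih =>
    intro V _ _ _ hle hpos f g hrank
    haveI : Nontrivial V := Module.finrank_pos_iff.mp hpos
    obtain ⟨μ, hμ⟩ := Module.End.exists_eigenvalue f
    obtain ⟨w, hw⟩ := hμ.exists_hasEigenvector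
    set f' : Module.End k V := f - algebraMap k (Module.End k V) μ with hf'def
    have hcomm : f' * g - g * f' = f * g - g * f := by
      rw [hf'def, sub_mul, mul_sub, Algebra.commutes]
      abel
    have haux : ∀ x : V, f' x = 0 → f x = μ • x := fun x hx => by
      simpa [hf'def, LinearMap.sub_apply, Module.algebraMap_end_apply, sub_eq_zero] using hx
    have hf'w : f' w = 0 := by
      simp [hf'def, LinearMap.sub_apply, Module.algebraMap_end_apply, hw.apply_eq_smul]
    by_cases hcase : ∀ x, f' x = 0 → (f * g - g * f) x = 0
    · -- the kernel of f' is g-invariant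
      have hKinv : ∀ x ∈ LinearMap.ker f', g x ∈ LinearMap.ker f' := by
        intro x hx
        rw [LinearMap.mem_ker] at hx ⊢
        have h1 : (f' * g - g * f') x = 0 := by rw [hcomm]; exact hcase x hx
        simpa [LinearMap.sub_apply, Module.End.mul_apply, hx, sub_eq_zero] using h1
      haveI : Nontrivial (LinearMap.ker f') :=
        Submodule.nontrivial_iff_ne_bot.mpr
          ((Submodule.ne_bot_iff _).mpr ⟨w, LinearMap.mem_ker.mpr hf'w, hw.2⟩)
      obtain ⟨b, hb⟩ := Module.End.exists_eigenvalue
        ((g.restrict hKinv : LinearMap.ker f' →ₗ[k] LinearMap.ker f'))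
      obtain ⟨w', hw'⟩ := hb.exists_hasEigenvector
      refine ⟨(w' : V), fun h0 => hw'.2 (Subtype.ext h0), ⟨μ, ?_⟩, ⟨b, ?_⟩⟩
      · exact haux _ (LinearMap.mem_ker.mp w'.2)
      · have h3 := congrArg (Subtype.val) hw'.apply_eq_smul
        rwa [LinearMap.restrict_coe_apply] at h3
    · push_neg at hcase
      obtain ⟨v₀, hv₀, hcv₀⟩ := hcase
      set c : Module.End k V := f * g - g * f with hcdef
      set W : Submodule k V := LinearMap.range f' with hWdef
      have hcv₀' : c v₀ = f' (g v₀) := by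
        have h1 : f' (g v₀) - g (f' v₀) = c v₀ := by
          simpa [LinearMap.sub_apply, Module.End.mul_apply] using DFunLike.congr_fun hcomm v₀
        rw [← h1, hv₀, map_zero, sub_zero]
      have hcv₀W : c v₀ ∈ W := hcv₀' ▸ LinearMap.mem_range_self f' (g v₀)
      have hrange : LinearMap.range c ≤ W := by
        have h1 : (k ∙ c v₀) ≤ LinearMap.range c :=
          (span_singleton_le_iff_mem _ _).mpr (LinearMap.mem_range_self c v₀)
        have h2 : finrank k (LinearMap.range c) ≤ finrank k (k ∙ c v₀) := by
          rw [finrank_span_singleton hcv₀]; exact hrank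
        rw [← Submodule.eq_of_le_of_finrank_le h1 h2]
        exact (span_singleton_le_iff_mem _ _).mpr hcv₀W
      have hfW : ∀ x ∈ W, f' x ∈ W := fun x _ => LinearMap.mem_range_self f' x
      have hgW : ∀ x ∈ W, g x ∈ W := by
        rintro x hx
        obtain ⟨y, rfl⟩ := hx
        have h2 : f' (g y) - g (f' y) = c y := by
          simpa [LinearMap.sub_apply, Module.End.mul_apply] using DFunLike.congr_fun hcomm y
        have h3 : g (f' y) = f' (g y) - c y := by rw [← h2]; abel
        rw [h3]
        exact sub_mem (LinearMap.mem_range_self f' (g y)) (hrange (LinearMap.mem_range_self c y))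
      have hcW : ∀ x ∈ W, c x ∈ W := fun x _ => hrange (LinearMap.mem_range_self c x)
      have hv₀0 : v₀ ≠ 0 := by
        intro h0; apply hcv₀; rw [h0, map_zero]
      have hWpos : 0 < finrank k W :=
        Module.finrank_pos_iff.mpr
          (Submodule.nontrivial_iff_ne_bot.mpr ((Submodule.ne_bot_iff _).mpr ⟨c v₀, hcv₀W, hcv₀⟩))
      have hKpos : 0 < finrank k (LinearMap.ker f') :=
        Module.finrank_pos_iff.mpr
          (Submodule.nontrivial_iff_ne_bot.mpr
            ((Submodule.ne_bot_iff _).mpr ⟨v₀, LinearMap.mem_ker.mpr hv₀, hv₀0⟩))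
      have hWlt : finrank k W < finrank k V := by
        have h4 := f'.finrank_range_add_finrank_ker
        rw [← hWdef] at h4
        omega
      have hrescomm : f'.restrict hfW * g.restrict hgW - g.restrict hgW * f'.restrict hfW
          = c.restrict hcW := by
        ext x
        have h5 : f' (g (x : V)) - g (f' (x : V)) = c (x : V) := by
          simpa [LinearMap.sub_apply, Module.End.mul_apply] using DFunLike.congr_fun hcomm (x : V)
        simpa [LinearMap.sub_apply, Module.End.mul_apply, LinearMap.restrict_coe_apply] using h5
      have hrank' : finrank k (LinearMap.range
          (f'.restrict hfW * g.restrict hgW - g.restrict hgW * f'.restrict hfW)) ≤ 1 := by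
        rw [hrescomm]
        exact le_trans (finrank_range_restrict_le c hcW) hrank
      obtain ⟨u, hu0, ⟨a, ha⟩, ⟨b, hb⟩⟩ :=
        ih W (by omega) hWpos (f'.restrict hfW) (g.restrict hgW) hrank'
      refine ⟨(u : V), fun h0 => hu0 (Subtype.ext h0), ⟨a + μ, ?_⟩, ⟨b, ?_⟩⟩
      · have h6 := congrArg Subtype.val ha
        rw [LinearMap.restrict_coe_apply] at h6
        have h7 : f (u : V) - μ • (u : V) = a • (u : V) := by
          simpa [hf'def, LinearMap.sub_apply, Module.algebraMap_end_apply] using h6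
        have := sub_eq_iff_eq_add.mp h7
        rw [this, add_smul]
      · have h8 := congrArg Subtype.val hb
        rwa [LinearMap.restrict_coe_apply] at h8

/-- Two endomorphisms whose commutator has rank at most one admit a basis realising a
common invariant complete flag. -/
private lemma exists_triangular_basis (n : ℕ) :
    ∀ (V : Type*) [AddCommGroup V] [Module k V] [FiniteDimensional k V],
      finrank k V = n → ∀ f g : Module.End k V,
      finrank k (LinearMap.range (f * g - g * f)) ≤ 1 →
      ∃ b : Basis (Fin n) k V,
        (∀ j, f (b j) ∈ span k (⇑b '' Set.Iic j)) ∧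
        (∀ j, g (b j) ∈ span k (⇑b '' Set.Iic j)) := by
  induction n with
  | zero =>
    intro V _ _ _ hdim f g _
    haveI : Subsingleton V := Module.finrank_zero_iff.mp hdim
    exact ⟨Basis.empty V, fun j => j.elim0, fun j => j.elim0⟩
  | succ n ih =>
    intro V _ _ _ hdim f g hrank
    obtain ⟨v, hv0, ⟨a, ha⟩, ⟨bb, hbb⟩⟩ :=
      exists_common_eigenvector (finrank k V) V le_rfl (by omega) f g hrank
    set p : Submodule k V := k ∙ v with hpdef
    have hfp : p ≤ p.comap f := by
      apply (span_singleton_le_iff_mem _ _).mpr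
      rw [Submodule.mem_comap, ha]
      exact smul_mem _ _ (mem_span_singleton_self v)
    have hgp : p ≤ p.comap g := by
      apply (span_singleton_le_iff_mem _ _).mpr
      rw [Submodule.mem_comap, hbb]
      exact smul_mem _ _ (mem_span_singleton_self v)
    have hcp : p ≤ p.comap (f * g - g * f) := by
      apply (span_singleton_le_iff_mem _ _).mpr
      rw [Submodule.mem_comap]
      have h1 : (f * g - g * f) v = bb • (a • v) - a • (bb • v) := by
        simp [LinearMap.sub_apply, Module.End.mul_apply, ha, hbb, map_smul]
      rw [h1]
      exact sub_mem (smul_mem _ _ (smul_mem _ _ (mem_span_singleton_self v)))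
        (smul_mem _ _ (smul_mem _ _ (mem_span_singleton_self v)))
    have hQdim : finrank k (V ⧸ p) = n := by
      have h1 := p.finrank_quotient_add_finrank
      have h2 : finrank k p = 1 := finrank_span_singleton hv0
      omega
    have hQcomm : p.mapQ p f hfp * p.mapQ p g hgp - p.mapQ p g hgp * p.mapQ p f hfp
        = p.mapQ p (f * g - g * f) hcp := by
      apply Submodule.linearMap_qext
      ext x
      simp [Submodule.mapQ_apply, LinearMap.sub_apply, Module.End.mul_apply, map_sub]
    have hrankQ : finrank k (LinearMap.range
        (p.mapQ p f hfp * p.mapQ p g hgp - p.mapQ p g hgp * p.mapQ p f hfp)) ≤ 1 := by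
      rw [hQcomm]
      have h1 : LinearMap.range (p.mapQ p (f * g - g * f) hcp)
          = (LinearMap.range (f * g - g * f)).map p.mkQ := by
        rw [← LinearMap.range_comp_of_range_eq_top _ p.range_mkQ, Submodule.mapQ_mkQ,
          LinearMap.range_comp]
      rw [h1]
      exact le_trans (Submodule.finrank_map_le _ _) hrank
    obtain ⟨cb, hcf, hcg⟩ := ih (V ⧸ p) hQdim (p.mapQ p f hfp) (p.mapQ p g hgp) hrankQ
    choose w hw using fun i => p.mkQ_surjective (cb i)
    set b0 : Fin (n + 1) → V := Fin.cons v w with hb0def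
    have hb00 : b0 0 = v := Fin.cons_zero _ _
    have hb0s : ∀ i, b0 i.succ = w i := fun i => Fin.cons_succ _ _ _
    have hspan : ⊤ ≤ span k (Set.range b0) := by
      intro x _
      have h1 : p.mkQ x ∈ span k (Set.range ⇑cb) := by rw [cb.span_eq]; trivial
      have h2 : Set.range ⇑cb = p.mkQ '' Set.range w := by
        rw [← Set.range_comp]
        exact congrArg Set.range (funext fun i => (hw i).symm)
      rw [h2, Submodule.span_image] at h1
      have h3 : x ∈ p ⊔ span k (Set.range w) := by
        rw [← Submodule.comap_map_mkQ]; exact h1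
      refine (sup_le ?_ ?_ : p ⊔ span k (Set.range w) ≤ span k (Set.range b0)) h3
      · exact (span_singleton_le_iff_mem _ _).mpr (subset_span ⟨0, hb00⟩)
      · apply span_mono
        rintro _ ⟨i, rfl⟩
        exact ⟨i.succ, hb0s i⟩
    have hcard : Fintype.card (Fin (n + 1)) = finrank k V := by
      rw [Fintype.card_fin, hdim]
    set b : Basis (Fin (n + 1)) k V := basisOfTopLeSpanOfCardEqFinrank b0 hspan hcard with hbdef
    have hb : ⇑b = b0 := coe_basisOfTopLeSpanOfCardEqFinrank b0 hspan hcard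
    have key : ∀ (h : Module.End k V) (hp : p ≤ p.comap h) (s : k), h v = s • v →
        (∀ j, (p.mapQ p h hp) (cb j) ∈ span k (⇑cb '' Set.Iic j)) →
        ∀ j, h (b j) ∈ span k (⇑b '' Set.Iic j) := by
      intro h hp s hs hQ j
      rw [hb]
      induction j using Fin.cases with
      | zero =>
        rw [hb00, hs]
        exact smul_mem _ _ (subset_span ⟨0, Set.mem_Iic.mpr le_rfl, hb00⟩)
      | succ i =>
        rw [hb0s i]
        have h1 : p.mkQ (h (w i)) ∈ span k (⇑cb '' Set.Iic i) := by
          have h0 : (p.mapQ p h hp) (p.mkQ (w i)) = p.mkQ (h (w i)) := by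
            have h0' := LinearMap.congr_fun (p.mapQ_mkQ (q := p) (f := h) (h := hp)) (w i)
            simpa using h0'
          rw [← h0, hw i]
          exact hQ i
        have h2 : ⇑cb '' Set.Iic i = p.mkQ '' (w '' Set.Iic i) := by
          rw [← Set.image_comp]
          exact Set.image_congr fun j _ => (hw j).symm
        rw [h2, Submodule.span_image] at h1
        have h3 : h (w i) ∈ p ⊔ span k (w '' Set.Iic i) := by
          rw [← Submodule.comap_map_mkQ]; exact h1
        refine (sup_le ?_ ?_ : p ⊔ span k (w '' Set.Iic i) ≤ span k (b0 '' Set.Iic i.succ)) h3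
        · exact (span_singleton_le_iff_mem _ _).mpr
            (subset_span ⟨0, Set.mem_Iic.mpr (Fin.zero_le _), hb00⟩)
        · apply span_mono
          rintro _ ⟨j, hj, rfl⟩
          exact ⟨j.succ, Set.mem_Iic.mpr (Fin.succ_le_succ_iff.mpr (Set.mem_Iic.mp hj)),
            hb0s j⟩
    exact ⟨b, key f hfp a ha hcf, key g hgp bb hbb hcg⟩

end Aux

/-- The linear algebra statement used in the proof of Lemma 2.9: two `n × n` matrices
whose commutator has rank at most one can be simultaneously conjugated to upper
triangular form. -/
theorem simultaneous_triangularisation_of_rank_le_one_commutator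
    {k : Type*} [Field k] [IsAlgClosed k] [CharZero k]
    {n : ℕ} (hn : 1 ≤ n)
    (B₁ B₂ : Matrix (Fin n) (Fin n) k)
    (hrank : (B₁ * B₂ - B₂ * B₁).rank ≤ 1) :
    ∃ g : GL (Fin n) k,
      ((g : Matrix (Fin n) (Fin n) k) * B₁ *
        ((g⁻¹ : GL (Fin n) k) : Matrix (Fin n) (Fin n) k)).BlockTriangular id ∧
      ((g : Matrix (Fin n) (Fin n) k) * B₂ *
        ((g⁻¹ : GL (Fin n) k) : Matrix (Fin n) (Fin n) k)).BlockTriangular id := by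
  classical
  set f : Module.End k (Fin n → k) := Matrix.mulVecLin B₁ with hfdef
  set g : Module.End k (Fin n → k) := Matrix.mulVecLin B₂ with hgdef
  have hcomm : f * g - g * f = Matrix.mulVecLin (B₁ * B₂ - B₂ * B₁) := by
    ext x
    simp [hfdef, hgdef, LinearMap.sub_apply, Module.End.mul_apply, Matrix.mulVecLin_apply,
      Matrix.sub_mulVec, Matrix.mulVec_mulVec, Matrix.mulVec, Matrix.mul_apply,
      dotProduct, Finset.mul_sum, Finset.sum_mul, mul_comm, mul_left_comm,
      Pi.single_apply, ite_mul, one_mul, zero_mul, Finset.sum_ite_eq', Finset.sum_ite_eq]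
  have hrank' : finrank k (LinearMap.range (f * g - g * f)) ≤ 1 := by
    rw [hcomm]; exact hrank
  have hdim : finrank k (Fin n → k) = n := Module.finrank_fin_fun k
  obtain ⟨b, hbf, hbg⟩ := exists_triangular_basis n (Fin n → k) hdim f g hrank'
  set e : Basis (Fin n) k (Fin n → k) := Pi.basisFun k (Fin n) with hedef
  have htri : ∀ (h : Module.End k (Fin n → k)),
      (∀ j, h (b j) ∈ span k (⇑b '' Set.Iic j)) →
      (LinearMap.toMatrix b b h).BlockTriangular id := by
    intro h hh i j hij
    have h1 := hh j
    rw [Basis.mem_span_image] at h1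
    have h2 : i ∉ (b.repr (h (b j))).support := by
      intro hmem
      exact (not_le.mpr hij) (Set.mem_Iic.mp (h1 hmem))
    rw [LinearMap.toMatrix_apply]
    exact Finsupp.notMem_support_iff.mp h2
  have hB₁ : LinearMap.toMatrix e e f = B₁ := by
    rw [hedef, LinearMap.toMatrix_eq_toMatrix']
    exact LinearMap.toMatrix'_toLin' B₁
  have hB₂ : LinearMap.toMatrix e e g = B₂ := by
    rw [hedef, LinearMap.toMatrix_eq_toMatrix']
    exact LinearMap.toMatrix'_toLin' B₂
  refine ⟨⟨b.toMatrix e, e.toMatrix b, Basis.toMatrix_mul_toMatrix_flip b e,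
    Basis.toMatrix_mul_toMatrix_flip e b⟩, ?_, ?_⟩
  · show (b.toMatrix e * B₁ * e.toMatrix b).BlockTriangular id
    rw [← hB₁, basis_toMatrix_mul_linearMap_toMatrix_mul_basis_toMatrix]
    exact htri f hbf
  · show (b.toMatrix e * B₂ * e.toMatrix b).BlockTriangular id
    rw [← hB₂, basis_toMatrix_mul_linearMap_toMatrix_mul_basis_toMatrix]
    exact htri g hbg
end

section
/- Let n ≥ 1. Consider triples (B₁, B₂, i) where B₁, B₂ are commuting endomorphisms of kⁿ and i ∈ kⁿ is a cyclic vector for B₁, B₂, with GL(n,k) acting by g·(B₁,B₂,i) = (gB₁g⁻¹, gB₂g⁻¹, g·i). The assignment sending (B₁, B₂, i) to the ideal I = { p ∈ k[x,y] : p(B₁,B₂)·i = 0 } induces a well-defined bijection between the set of GL(n,k)-orbits of such triples and the set of ideals I ⊆ k[x,y] with dim_k k[x,y]/I = n. (This is the set-theoretic content of Theorem 2.2, the GIT construction of Hilb^{[n]}(𝔸²).) -/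
noncomputable section

/-- Evaluation of `p ∈ k[x,y]` at a pair of (commuting) endomorphisms, substituting
`B₁, B₂` for `x, y` monomial by monomial. -/
def evalEnd2 {k : Type*} [Field k] {V : Type*} [AddCommGroup V] [Module k V]
    (p : MvPolynomial (Fin 2) k) (B₁ B₂ : Module.End k V) : Module.End k V :=
  (AddMonoidAlgebra.coeff p).sum fun m c => c • (B₁ ^ m 0 * B₂ ^ m 1)

/-- A triple `(B₁, B₂, i)` consisting of two commuting endomorphisms of `kⁿ` together
with a cyclic vector. -/
def IsGoodTriple {k : Type*} [Field k] {n : ℕ}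
    (T : Module.End k (Fin n → k) × Module.End k (Fin n → k) × (Fin n → k)) : Prop :=
  T.1 * T.2.1 = T.2.1 * T.1 ∧ IsCyclicVector ![T.1, T.2.1] T.2.2

/-- The set of polynomials `p ∈ k[x,y]` with `p(B₁,B₂)·i = 0`. -/
def annihilatorSet {k : Type*} [Field k] {n : ℕ}
    (T : Module.End k (Fin n → k) × Module.End k (Fin n → k) × (Fin n → k)) :
    Set (MvPolynomial (Fin 2) k) :=
  {p | evalEnd2 p T.1 T.2.1 T.2.2 = 0}

/-- Two triples lie in the same `GL(n,k)`-orbit. -/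
def SameOrbit {k : Type*} [Field k] {n : ℕ}
    (T T' : Module.End k (Fin n → k) × Module.End k (Fin n → k) × (Fin n → k)) : Prop :=
  ∃ g : (Module.End k (Fin n → k))ˣ,
    T'.1 = (g : Module.End k (Fin n → k)) * T.1 * ((g⁻¹ : (Module.End k (Fin n → k))ˣ)) ∧
    T'.2.1 = (g : Module.End k (Fin n → k)) * T.2.1 * ((g⁻¹ : (Module.End k (Fin n → k))ˣ)) ∧
    T'.2.2 = (g : Module.End k (Fin n → k)) T.2.2

namespace Thm22


open MvPolynomial

variable {k : Type*} [Field k] {V : Type*} [AddCommGroup V] [Module k V]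

/-- sum formula for any algebra hom out of `k[x,y]`. -/
lemma algHom_sum_formula {S : Type*} [Semiring S] [Algebra k S]
    (ψ : MvPolynomial (Fin 2) k →ₐ[k] S) (p : MvPolynomial (Fin 2) k) :
    ψ p = (AddMonoidAlgebra.coeff p).sum fun m c => c • (ψ (X 0) ^ m 0 * ψ (X 1) ^ m 1) := by
  conv_lhs => rw [p.as_sum]
  rw [map_sum, Finsupp.sum]
  refine Finset.sum_congr rfl fun m hm => ?_
  rw [MvPolynomial.monomial_eq, Finsupp.prod_pow, Fin.prod_univ_two]
  simp [Algebra.smul_def, mul_assoc]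
  rfl

lemma evalEnd2_eq_algHom (ψ : MvPolynomial (Fin 2) k →ₐ[k] Module.End k V)
    (p : MvPolynomial (Fin 2) k) :
    evalEnd2 p (ψ (X 0)) (ψ (X 1)) = ψ p :=
  (algHom_sum_formula ψ p).symm

/-- evaluation at commuting endomorphisms as an algebra hom. -/
def evalAlgHom (B₁ B₂ : Module.End k V) (h : B₁ * B₂ = B₂ * B₁) :
    MvPolynomial (Fin 2) k →ₐ[k] Module.End k V :=
  letI : CommSemiring (Algebra.adjoin k ({B₁, B₂} : Set (Module.End k V))) :=
    Algebra.adjoinCommSemiringOfComm k (by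
      rintro a (rfl | rfl) b (rfl | rfl) <;> simp_all)
  ((Algebra.adjoin k ({B₁, B₂} : Set (Module.End k V))).val).comp
    (MvPolynomial.aeval ![⟨B₁, Algebra.subset_adjoin (by simp)⟩,
      ⟨B₂, Algebra.subset_adjoin (by simp)⟩])

@[simp] lemma evalAlgHom_X0 (B₁ B₂ : Module.End k V) (h : B₁ * B₂ = B₂ * B₁) :
    evalAlgHom B₁ B₂ h (X 0) = B₁ := by simp [evalAlgHom]

@[simp] lemma evalAlgHom_X1 (B₁ B₂ : Module.End k V) (h : B₁ * B₂ = B₂ * B₁) :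
    evalAlgHom B₁ B₂ h (X 1) = B₂ := by simp [evalAlgHom]

lemma evalEnd2_eq (p : MvPolynomial (Fin 2) k) (B₁ B₂ : Module.End k V)
    (h : B₁ * B₂ = B₂ * B₁) : evalEnd2 p B₁ B₂ = evalAlgHom B₁ B₂ h p := by
  rw [algHom_sum_formula, evalAlgHom_X0, evalAlgHom_X1]
  rfl

/-- evaluation-at-`i` linear map `p ↦ p(B₁,B₂) i`. -/
def evalAt (B₁ B₂ : Module.End k V) (h : B₁ * B₂ = B₂ * B₁) (i : V) :
    MvPolynomial (Fin 2) k →ₗ[k] V where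
  toFun p := evalAlgHom B₁ B₂ h p i
  map_add' p q := by simp [map_add, LinearMap.add_apply]
  map_smul' c p := by simp [map_smul, LinearMap.smul_apply]

@[simp] lemma evalAt_apply (B₁ B₂ : Module.End k V) (h) (i : V) (p : MvPolynomial (Fin 2) k) :
    evalAt B₁ B₂ h i p = evalAlgHom B₁ B₂ h p i := rfl

@[simp] lemma evalAt_one (B₁ B₂ : Module.End k V) (h) (i : V) :
    evalAt B₁ B₂ h i 1 = i := by simp [evalAt_apply, map_one]

lemma evalAt_mul (B₁ B₂ : Module.End k V) (h) (i : V) (q p : MvPolynomial (Fin 2) k) :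
    evalAt B₁ B₂ h i (q * p) = evalAlgHom B₁ B₂ h q (evalAt B₁ B₂ h i p) := by
  simp [evalAt_apply, map_mul, Module.End.mul_apply]

lemma evalAt_X_mul (B₁ B₂ : Module.End k V) (h) (i : V) (s : Fin 2) (p : MvPolynomial (Fin 2) k) :
    evalAt B₁ B₂ h i (X s * p) = (![B₁, B₂] s) (evalAt B₁ B₂ h i p) := by
  rw [evalAt_mul]
  fin_cases s <;> simp

lemma evalAt_surjective (B₁ B₂ : Module.End k V) (h) (i : V)
    (hc : IsCyclicVector ![B₁, B₂] i) : Function.Surjective (evalAt B₁ B₂ h i) := by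
  rw [← LinearMap.range_eq_top]
  refine hc _ ⟨1, evalAt_one B₁ B₂ h i⟩ ?_
  rintro s v ⟨p, rfl⟩
  exact ⟨X s * p, evalAt_X_mul B₁ B₂ h i s p⟩

/-- the annihilator ideal of `(B₁, B₂, i)`. -/
def annIdeal (B₁ B₂ : Module.End k V) (h : B₁ * B₂ = B₂ * B₁) (i : V) :
    Ideal (MvPolynomial (Fin 2) k) where
  carrier := {p | evalAlgHom B₁ B₂ h p i = 0}
  add_mem' := by
    intro a b ha hb
    simp only [Set.mem_setOf_eq, map_add, LinearMap.add_apply] at *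
    rw [ha, hb, add_zero]
  zero_mem' := by simp
  smul_mem' := by
    intro c p hp
    simp only [Set.mem_setOf_eq, smul_eq_mul, map_mul, Module.End.mul_apply] at *
    rw [hp, map_zero]

lemma annIdeal_eq_ker (B₁ B₂ : Module.End k V) (h) (i : V) :
    (annIdeal B₁ B₂ h i).restrictScalars k = LinearMap.ker (evalAt B₁ B₂ h i) := rfl

end Thm22

namespace Thm22
open MvPolynomial
variable {k : Type*} [Field k] {V : Type*} [AddCommGroup V] [Module k V]

/-- quotient by kernel equiv, with a usable apply lemma. -/
def quotKer {M : Type*} [AddCommGroup M] [Module k M] (φ : M →ₗ[k] V)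
    (hs : Function.Surjective φ) : (M ⧸ LinearMap.ker φ) ≃ₗ[k] V :=
  LinearEquiv.ofBijective ((LinearMap.ker φ).liftQ φ le_rfl)
    ⟨by rw [← LinearMap.ker_eq_bot]; exact Submodule.ker_liftQ_eq_bot _ _ _ le_rfl,
     fun v => by obtain ⟨p, rfl⟩ := hs v; exact ⟨Submodule.Quotient.mk p, Submodule.liftQ_apply _ _ (h := le_rfl) _⟩⟩

@[simp] lemma quotKer_mk {M : Type*} [AddCommGroup M] [Module k M] (φ : M →ₗ[k] V)
    (hs : Function.Surjective φ) (p : M) :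
    quotKer φ hs (Submodule.Quotient.mk p) = φ p := Submodule.liftQ_apply _ _ (h := le_rfl) _

lemma finrank_quot_annIdeal (B₁ B₂ : Module.End k V) (h) (i : V)
    (hc : IsCyclicVector ![B₁, B₂] i) :
    Module.finrank k (MvPolynomial (Fin 2) k ⧸ annIdeal B₁ B₂ h i) = Module.finrank k V := by
  have e1 := (Submodule.Quotient.restrictScalarsEquiv k (annIdeal B₁ B₂ h i)).symm
  rw [annIdeal_eq_ker] at e1
  have e2 := quotKer (evalAt B₁ B₂ h i) (evalAt_surjective B₁ B₂ h i hc)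
  exact (e1.trans e2).finrank_eq

end Thm22

namespace Thm22
open MvPolynomial
variable {k : Type*} [Field k] {V : Type*} [AddCommGroup V] [Module k V]

/-- conjugation by a unit as an algebra hom. -/
def unitConjAlgHom (g : (Module.End k V)ˣ) : Module.End k V →ₐ[k] Module.End k V where
  toFun q := ↑g * q * ↑g⁻¹
  map_one' := by simp
  map_mul' a b := by
    have key : ∀ z : Module.End k V, (↑g⁻¹ : Module.End k V) * ((↑g : Module.End k V) * z) = z :=
      fun z => by rw [← mul_assoc, g.inv_mul, one_mul]
    show (↑g : Module.End k V) * (a * b) * ↑g⁻¹ = ↑g * a * ↑g⁻¹ * (↑g * b * ↑g⁻¹)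
    simp only [mul_assoc]
    rw [key (b * ↑g⁻¹)]
  map_zero' := by simp
  map_add' a b := by
    show (↑g : Module.End k V) * (a + b) * ↑g⁻¹ = ↑g * a * ↑g⁻¹ + ↑g * b * ↑g⁻¹
    rw [mul_add, add_mul]
  commutes' c := by
    show (↑g : Module.End k V) * algebraMap k (Module.End k V) c * ↑g⁻¹ = _
    rw [Algebra.algebraMap_eq_smul_one, mul_smul_comm, smul_mul_assoc, mul_one, g.mul_inv]

lemma evalAlgHom_conj (g : (Module.End k V)ˣ) (B₁ B₂ : Module.End k V)
    (h : B₁ * B₂ = B₂ * B₁)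
    (h' : ((g : Module.End k V) * B₁ * (↑g⁻¹ : Module.End k V)) * ((g : Module.End k V) * B₂ * ↑g⁻¹) = ((g : Module.End k V) * B₂ * (↑g⁻¹ : Module.End k V)) * ((g : Module.End k V) * B₁ * (↑g⁻¹ : Module.End k V)))
    (p : MvPolynomial (Fin 2) k) :
    evalAlgHom ((g : Module.End k V) * B₁ * (↑g⁻¹ : Module.End k V)) ((g : Module.End k V) * B₂ * (↑g⁻¹ : Module.End k V)) h' p
      = (g : Module.End k V) * evalAlgHom B₁ B₂ h p * (↑g⁻¹ : Module.End k V) := by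
  have hE : evalAlgHom ((g : Module.End k V) * B₁ * (↑g⁻¹ : Module.End k V)) ((g : Module.End k V) * B₂ * (↑g⁻¹ : Module.End k V)) h'
      = (unitConjAlgHom g).comp (evalAlgHom B₁ B₂ h) := by
    apply MvPolynomial.algHom_ext
    intro i
    fin_cases i <;> simp [unitConjAlgHom]
  rw [hE]; rfl

lemma exists_unit (B₁ B₂ B₁' B₂' : Module.End k V) (i i' : V)
    (h : B₁ * B₂ = B₂ * B₁) (h' : B₁' * B₂' = B₂' * B₁')
    (hc : IsCyclicVector ![B₁, B₂] i) (hc' : IsCyclicVector ![B₁', B₂'] i')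
    (hann : ∀ p : MvPolynomial (Fin 2) k,
      evalAlgHom B₁ B₂ h p i = 0 ↔ evalAlgHom B₁' B₂' h' p i' = 0) :
    ∃ g : (Module.End k V)ˣ,
      B₁' = (g : Module.End k V) * B₁ * (↑g⁻¹ : Module.End k V) ∧ B₂' = (g : Module.End k V) * B₂ * (↑g⁻¹ : Module.End k V) ∧
        i' = (g : Module.End k V) i := by
  set φ := evalAt B₁ B₂ h i with hφ
  set φ' := evalAt B₁' B₂' h' i' with hφ'
  have hs : Function.Surjective φ := evalAt_surjective B₁ B₂ h i hc
  have hs' : Function.Surjective φ' := evalAt_surjective B₁' B₂' h' i' hc'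
  have hker : LinearMap.ker φ = LinearMap.ker φ' := by
    ext p; exact hann p
  set gl : Module.End k V :=
    ((LinearMap.ker φ).liftQ φ' hker.le).comp (quotKer φ hs).symm.toLinearMap with hgl0
  set gl' : Module.End k V :=
    ((LinearMap.ker φ').liftQ φ hker.ge).comp (quotKer φ' hs').symm.toLinearMap with hgl0'
  have hgl : ∀ p, gl (φ p) = φ' p := by
    intro p
    have h1 : (quotKer φ hs).symm (φ p) = Submodule.Quotient.mk p := by
      rw [LinearEquiv.symm_apply_eq, quotKer_mk]
    simp only [hgl0, LinearMap.comp_apply, LinearEquiv.coe_coe, h1]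
    exact Submodule.liftQ_apply _ _ (h := hker.le) _
  have hgl' : ∀ p, gl' (φ' p) = φ p := by
    intro p
    have h1 : (quotKer φ' hs').symm (φ' p) = Submodule.Quotient.mk p := by
      rw [LinearEquiv.symm_apply_eq, quotKer_mk]
    simp only [hgl0', LinearMap.comp_apply, LinearEquiv.coe_coe, h1]
    exact Submodule.liftQ_apply _ _ (h := hker.ge) _
  have hmul : gl * gl' = 1 := by
    apply LinearMap.ext; intro v
    obtain ⟨p, rfl⟩ := hs' v
    rw [Module.End.mul_apply, hgl' p, hgl p, Module.End.one_apply]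
  have hmul' : gl' * gl = 1 := by
    apply LinearMap.ext; intro v
    obtain ⟨p, rfl⟩ := hs v
    rw [Module.End.mul_apply, hgl p, hgl' p, Module.End.one_apply]
  refine ⟨⟨gl, gl', hmul, hmul'⟩, ?_, ?_, ?_⟩
  · rw [Units.eq_mul_inv_iff_mul_eq]
    apply LinearMap.ext; intro v
    obtain ⟨p, rfl⟩ := hs v
    show B₁' (gl (φ p)) = gl (B₁ (φ p))
    have e1 : B₁ (φ p) = φ (X 0 * p) := by
      rw [hφ, evalAt_X_mul B₁ B₂ h i 0 p]; simp
    have e2 : B₁' (φ' p) = φ' (X 0 * p) := by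
      rw [hφ', evalAt_X_mul B₁' B₂' h' i' 0 p]; simp
    rw [hgl p, e1, e2, hgl (X 0 * p)]
  · rw [Units.eq_mul_inv_iff_mul_eq]
    apply LinearMap.ext; intro v
    obtain ⟨p, rfl⟩ := hs v
    show B₂' (gl (φ p)) = gl (B₂ (φ p))
    have e1 : B₂ (φ p) = φ (X 1 * p) := by
      rw [hφ, evalAt_X_mul B₁ B₂ h i 1 p]; simp
    have e2 : B₂' (φ' p) = φ' (X 1 * p) := by
      rw [hφ', evalAt_X_mul B₁' B₂' h' i' 1 p]; simp
    rw [hgl p, e1, e2, hgl (X 1 * p)]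
  · have := hgl 1
    rw [hφ, hφ', evalAt_one, evalAt_one] at this
    exact this.symm

end Thm22

namespace Thm22
open MvPolynomial
variable {k : Type*} [Field k] {V : Type*} [AddCommGroup V] [Module k V]

/-- conjugation by a linear equivalence as an algebra hom on endomorphism rings. -/
def conjAlgHom {M : Type*} [AddCommGroup M] [Module k M] (e : M ≃ₗ[k] V) :
    Module.End k M →ₐ[k] Module.End k V where
  toFun := e.conj
  map_one' := by
    show e.conj LinearMap.id = 1
    rw [LinearEquiv.conj_id]; rfl
  map_mul' f g := by
    apply LinearMap.ext; intro v
    simp [LinearEquiv.conj_apply_apply, Module.End.mul_apply, LinearEquiv.conj_apply]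
  map_zero' := map_zero e.conj
  map_add' := map_add e.conj
  commutes' c := by
    apply LinearMap.ext; intro v
    simp [LinearEquiv.conj_apply, Module.algebraMap_end_apply]

end Thm22

section Part3
open MvPolynomial Thm22

variable {k : Type*} [Field k]

set_option maxHeartbeats 1000000 in
set_option synthInstance.maxHeartbeats 400000 in
lemma part3 {n : ℕ} (hn : 1 ≤ n) (I : Ideal (MvPolynomial (Fin 2) k))
    (hI : Module.finrank k (MvPolynomial (Fin 2) k ⧸ I) = n) :
    ∃ T : Module.End k (Fin n → k) × Module.End k (Fin n → k) × (Fin n → k),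
      IsGoodTriple T ∧ (I : Set (MvPolynomial (Fin 2) k)) = annihilatorSet T := by
  classical
  set R := MvPolynomial (Fin 2) k with hR
  set Q := R ⧸ I with hQ
  haveI hfree : Module.Free k Q := Module.Free.of_divisionRing k Q
  haveI hfd : Module.Finite k Q := Module.finite_of_finrank_pos (by rw [hI]; omega)
  let b : Module.Basis (Fin n) k Q := Module.finBasisOfFinrankEq k Q hI
  let e : Q ≃ₗ[k] (Fin n → k) := b.equivFun
  let ψ : R →ₐ[k] Module.End k (Fin n → k) :=
    (conjAlgHom e).comp ((Algebra.lmul k Q).comp (Ideal.Quotient.mkₐ k I))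
  have hψ : ∀ (p : R) (q : Q), ψ p (e q) = e (Ideal.Quotient.mk I p * q) := by
    intro p q
    show e.conj (Algebra.lmul k Q (Ideal.Quotient.mkₐ k I p)) (e q) = _
    rw [LinearEquiv.conj_apply_apply, e.symm_apply_apply, Ideal.Quotient.mkₐ_eq_mk]
    rfl
  set B₁ : Module.End k (Fin n → k) := ψ (X 0) with hB₁
  set B₂ : Module.End k (Fin n → k) := ψ (X 1) with hB₂
  set i : Fin n → k := e 1 with hi
  have hcomm : B₁ * B₂ = B₂ * B₁ := by
    rw [hB₁, hB₂, ← map_mul, ← map_mul, mul_comm]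
  have hEval : ∀ p : R, evalEnd2 p B₁ B₂ = ψ p := fun p => evalEnd2_eq_algHom ψ p
  refine ⟨(B₁, B₂, i), ⟨hcomm, ?_⟩, ?_⟩
  · -- cyclicity
    intro W hiW hinv
    set W' : Submodule k Q := W.comap (e : Q →ₗ[k] (Fin n → k)) with hW'def
    have h1 : (1 : Q) ∈ W' := hiW
    have hX : ∀ s : Fin 2, ∀ q ∈ W', Ideal.Quotient.mk I (X s) * q ∈ W' := by
      intro s q hq
      have h0 : B₁ (e q) ∈ W := hinv 0 (e q) hq
      have h1 : B₂ (e q) ∈ W := hinv 1 (e q) hq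
      have e0 : e (Ideal.Quotient.mk I (X 0) * q) = B₁ (e q) := (hψ (X 0) q).symm
      have e1 : e (Ideal.Quotient.mk I (X 1) * q) = B₂ (e q) := (hψ (X 1) q).symm
      fin_cases s
      · show e (Ideal.Quotient.mk I (X 0) * q) ∈ W
        rw [e0]; exact h0
      · show e (Ideal.Quotient.mk I (X 1) * q) ∈ W
        rw [e1]; exact h1
    have hall : ∀ p : R, ∀ q ∈ W', Ideal.Quotient.mk I p * q ∈ W' := by
      intro p
      induction p using MvPolynomial.induction_on with
      | C a =>
        intro q hq
        rw [← MvPolynomial.algebraMap_eq, Ideal.Quotient.mk_algebraMap, ← Algebra.smul_def]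
        exact W'.smul_mem a hq
      | add p r hp hr =>
        intro q hq
        rw [map_add, add_mul]
        exact W'.add_mem (hp q hq) (hr q hq)
      | mul_X p s hp =>
        intro q hq
        rw [map_mul, mul_assoc]
        exact hp _ (hX s q hq)
    have hW' : W' = ⊤ := by
      rw [eq_top_iff]
      rintro q -
      obtain ⟨p, rfl⟩ := Ideal.Quotient.mk_surjective q
      simpa using hall p 1 h1
    rw [eq_top_iff]
    rintro v -
    have hv : e.symm v ∈ W' := by rw [hW']; trivial
    have : e (e.symm v) ∈ W := hv
    rwa [e.apply_symm_apply] at this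
  · -- annihilator
    ext p
    show p ∈ I ↔ evalEnd2 p B₁ B₂ i = 0
    rw [hEval p]
    have : ψ p i = e (Ideal.Quotient.mk I p) := by
      rw [hi, hψ p 1, mul_one]
    rw [this, LinearEquiv.map_eq_zero_iff, Ideal.Quotient.eq_zero_iff_mem]

end Part3

open MvPolynomial Thm22

/-- The set-theoretic content of Theorem 2.2: the assignment
`(B₁,B₂,i) ↦ { p ∈ k[x,y] : p(B₁,B₂)·i = 0 }` induces a well-defined bijection between
`GL(n,k)`-orbits of triples (commuting endomorphisms with a cyclic vector) and ideals
`I ⊆ k[x,y]` with `dim_k k[x,y]/I = n`. -/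
theorem orbits_biject_with_ideals
    {k : Type*} [Field k] [IsAlgClosed k] [CharZero k]
    {n : ℕ} (hn : 1 ≤ n) :
    (∀ T : Module.End k (Fin n → k) × Module.End k (Fin n → k) × (Fin n → k),
      IsGoodTriple T → ∃ I : Ideal (MvPolynomial (Fin 2) k),
        (I : Set (MvPolynomial (Fin 2) k)) = annihilatorSet T ∧
        Module.finrank k (MvPolynomial (Fin 2) k ⧸ I) = n) ∧
    (∀ T T' : Module.End k (Fin n → k) × Module.End k (Fin n → k) × (Fin n → k),
      IsGoodTriple T → IsGoodTriple T' →
        (annihilatorSet T = annihilatorSet T' ↔ SameOrbit T T')) ∧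
    (∀ I : Ideal (MvPolynomial (Fin 2) k),
      Module.finrank k (MvPolynomial (Fin 2) k ⧸ I) = n →
        ∃ T : Module.End k (Fin n → k) × Module.End k (Fin n → k) × (Fin n → k),
          IsGoodTriple T ∧ (I : Set (MvPolynomial (Fin 2) k)) = annihilatorSet T) := by
  refine ⟨?_, ?_, fun I hI => part3 hn I hI⟩
  · rintro ⟨B₁, B₂, i⟩ ⟨hcomm, hcyc⟩
    refine ⟨annIdeal B₁ B₂ hcomm i, ?_, ?_⟩
    · ext p
      show evalAlgHom B₁ B₂ hcomm p i = 0 ↔ evalEnd2 p B₁ B₂ i = 0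
      rw [evalEnd2_eq p B₁ B₂ hcomm]
    · rw [finrank_quot_annIdeal B₁ B₂ hcomm i hcyc]
      exact Module.finrank_fin_fun k
  · rintro ⟨B₁, B₂, i⟩ ⟨B₁', B₂', i'⟩ ⟨h, hc⟩ ⟨h', hc'⟩
    constructor
    · intro hann
      have hann' : ∀ p, evalAlgHom B₁ B₂ h p i = 0 ↔ evalAlgHom B₁' B₂' h' p i' = 0 := by
        intro p
        have hmem := Set.ext_iff.mp hann p
        simp only [annihilatorSet, Set.mem_setOf_eq] at hmem
        rwa [evalEnd2_eq p B₁ B₂ h, evalEnd2_eq p B₁' B₂' h'] at hmem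
      obtain ⟨g, h1, h2, h3⟩ := exists_unit B₁ B₂ B₁' B₂' i i' h h' hc hc' hann'
      exact ⟨g, h1, h2, h3⟩
    · rintro ⟨g, h1, h2, h3⟩
      simp only at h1 h2 h3
      subst h1; subst h2; subst h3
      ext p
      simp only [annihilatorSet, Set.mem_setOf_eq]
      rw [evalEnd2_eq p B₁ B₂ h, evalEnd2_eq p _ _ h', evalAlgHom_conj g B₁ B₂ h h' p]
      have hinvg : (↑g⁻¹ : Module.End k (Fin n → k)) ((↑g : Module.End k (Fin n → k)) i) = i := by
        rw [← Module.End.mul_apply, g.inv_mul, Module.End.one_apply]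
      have happ : ((↑g : Module.End k (Fin n → k)) * evalAlgHom B₁ B₂ h p *
          (↑g⁻¹ : Module.End k (Fin n → k))) ((↑g : Module.End k (Fin n → k)) i)
          = (↑g : Module.End k (Fin n → k)) (evalAlgHom B₁ B₂ h p i) := by
        rw [Module.End.mul_apply, Module.End.mul_apply, hinvg]
      rw [happ]
      constructor
      · intro h0; rw [h0, map_zero]
      · intro h0
        have h1 := congrArg (↑g⁻¹ : Module.End k (Fin n → k)) h0
        rwa [← Module.End.mul_apply, g.inv_mul, Module.End.one_apply, map_zero] at h1
end
end
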